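/- Let f_u > 0, let F ⊂ Λ₀ be a Borel set of positive Lebesgue measure |F| > 0, and let ψ be as in the context. Then there exists a constant c₁ > 0, depending only on d, f_u, |F| and s, with the following property: for every locally finite Borel measure ν on ℝ^d, every h > 0 and every L > 1, setting Λ := ⋃_{j∈ℤ^d, |j| < L} Λ_j, Λ̃ := ⋃_{j∈ℤ^d, |j| < L−1} Λ_j, and V_h(x) := f_u · ν^{(h)}(x − F) where x − F := {x − z : z ∈ F}, one has |Λ|^{−1} ∫_Λ V_h(x) ψ(x)² dx ≥ c₁ · h · |Λ̃|^{−1} · #{j ∈ ℤ^d : |j| < L − 1 and ν(Λ_j) ≥ h}. -/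

import Mathlib

open MeasureTheory ENNReal

noncomputable section

/-- The half-open unit cube `Λ_j = j + [-1/2, 1/2)^d` centred at the lattice point `j`. -/
def cube (d : ℕ) (j : Fin d → ℤ) : Set (Fin d → ℝ) :=
  {x | ∀ i, (j i : ℝ) - 1/2 ≤ x i ∧ x i < (j i : ℝ) + 1/2}

/-- The lattice point `j ∈ ℤ^d` viewed as a vector of `ℝ^d`. -/
def latVec (d : ℕ) (j : Fin d → ℤ) : Fin d → ℝ := fun i => (j i : ℝ)

open scoped Classical in
/-- The regularised measure `ν^{(h)} = Σ_j c_j · ν|_{Λ_j}` with `c_j = 1` if `ν(Λ_j) ≤ h`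
and `c_j = h/ν(Λ_j)` otherwise. -/
def reg (d : ℕ) (ν : Measure (Fin d → ℝ)) (h : ℝ) : Measure (Fin d → ℝ) :=
  Measure.sum fun j : Fin d → ℤ =>
    (if ν (cube d j) ≤ ENNReal.ofReal h then 1
      else ENNReal.ofReal h / ν (cube d j)) • (ν.restrict (cube d j))

open scoped Classical in
/-- The coefficient `c_j` of the regularised measure. -/
def regCoef (d : ℕ) (ν : Measure (Fin d → ℝ)) (h : ℝ) (j : Fin d → ℤ) : ℝ≥0∞ :=
  if ν (cube d j) ≤ ENNReal.ofReal h then 1 else ENNReal.ofReal h / ν (cube d j)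

lemma reg_eq (d : ℕ) (ν : Measure (Fin d → ℝ)) (h : ℝ) :
    reg d ν h = Measure.sum fun j => regCoef d ν h j • ν.restrict (cube d j) := rfl

section Cubes

lemma cube_eq (d : ℕ) (j : Fin d → ℤ) :
    cube d j = Set.pi Set.univ (fun i => Set.Ico ((j i : ℝ) - 1/2) ((j i : ℝ) + 1/2)) := by
  ext x; simp [cube, Set.mem_pi]

lemma measurableSet_cube (d : ℕ) (j : Fin d → ℤ) : MeasurableSet (cube d j) := by
  rw [cube_eq]; exact MeasurableSet.univ_pi fun i => measurableSet_Ico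

lemma volume_cube (d : ℕ) (j : Fin d → ℤ) : volume (cube d j) = 1 := by
  rw [cube_eq, volume_pi_pi]
  simp only [Real.volume_Ico]
  norm_num

lemma cube_index_eq {d : ℕ} {x : Fin d → ℝ} {j : Fin d → ℤ} (hx : x ∈ cube d j) (i : Fin d) :
    j i = ⌊x i + 1/2⌋ := by
  symm; rw [Int.floor_eq_iff]
  constructor <;> [skip; push_cast] <;> linarith [(hx i).1, (hx i).2]

lemma cube_disjoint {d : ℕ} {j k : Fin d → ℤ} (hjk : j ≠ k) : Disjoint (cube d j) (cube d k) := by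
  rw [Set.disjoint_left]; intro x hxj hxk
  exact hjk (funext fun i => (cube_index_eq hxj i).trans (cube_index_eq hxk i).symm)

lemma mem_cube_floor {d : ℕ} (x : Fin d → ℝ) : x ∈ cube d (fun i => ⌊x i + 1/2⌋) := by
  intro i
  constructor
  · have := Int.floor_le (x i + 1/2); linarith
  · have := Int.lt_floor_add_one (x i + 1/2); push_cast at this ⊢; linarith

lemma cube_subset_ball (d : ℕ) (j : Fin d → ℤ) :
    cube d j ⊆ Metric.closedBall (latVec d j) 1 := by
  intro x hx
  rw [Metric.mem_closedBall, dist_pi_le_iff zero_le_one]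
  intro i
  rw [Real.dist_eq, abs_le]
  have := hx i
  constructor <;> simp only [latVec] <;> cases this <;> linarith

lemma measure_cube_lt_top (d : ℕ) (ν : Measure (Fin d → ℝ)) [IsLocallyFiniteMeasure ν]
    (j : Fin d → ℤ) : ν (cube d j) < ⊤ :=
  lt_of_le_of_lt (measure_mono (cube_subset_ball d j))
    (isCompact_closedBall _ _).measure_lt_top

end Cubes

section Latt

/-- Lattice points of sup-norm `< r`, as a finset. -/
def lattFin (d : ℕ) (r : ℝ) : Finset (Fin d → ℤ) :=
  Fintype.piFinset fun _ : Fin d => Finset.Icc (-(⌈r⌉-1)) (⌈r⌉-1)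

lemma mem_lattFin {d : ℕ} {r : ℝ} (hr : 0 < r) {j : Fin d → ℤ} :
    j ∈ lattFin d r ↔ ‖j‖ < r := by
  rw [lattFin, Fintype.mem_piFinset, pi_norm_lt_iff hr]
  refine forall_congr' fun i => ?_
  rw [Finset.mem_Icc, Int.norm_eq_abs]
  have hcast : |(j i : ℝ)| = ((|j i| : ℤ) : ℝ) := by push_cast; ring
  rw [hcast]
  constructor
  · intro ⟨h1, h2⟩
    have h3 : |j i| ≤ ⌈r⌉ - 1 := abs_le.mpr ⟨h1, h2⟩
    have h4 : ((|j i| : ℤ) : ℝ) ≤ ((⌈r⌉ - 1 : ℤ) : ℝ) := by exact_mod_cast h3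
    have h5 := Int.ceil_lt_add_one r
    push_cast at h4; linarith
  · intro h
    have h1 : |j i| < ⌈r⌉ := Int.lt_ceil.mpr h
    have h2 := abs_le.mp (by omega : |j i| ≤ ⌈r⌉ - 1)
    exact h2

lemma lattSet_eq (d : ℕ) {r : ℝ} (hr : 0 < r) :
    {j : Fin d → ℤ | ‖j‖ < r} = ↑(lattFin d r) := by
  ext j; simp [mem_lattFin hr]

lemma card_lattFin (d : ℕ) (r : ℝ) :
    (lattFin d r).card = (2*⌈r⌉-1).toNat ^ d := by
  rw [lattFin, Fintype.card_piFinset]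
  simp [Int.card_Icc]
  congr 1
  omega

lemma volume_biUnion_latt (d : ℕ) {r : ℝ} (hr : 0 < r) :
    volume (⋃ j ∈ {j : Fin d → ℤ | ‖j‖ < r}, cube d j) = ((2*⌈r⌉-1).toNat ^ d : ℕ) := by
  rw [lattSet_eq d hr, Finset.set_biUnion_coe]
  rw [measure_biUnion_finset ?_ fun j _ => measurableSet_cube d j]
  · simp [volume_cube, card_lattFin]
  · intro i _ j _ hij
    exact cube_disjoint hij

end Latt

section SubImage

variable {d : ℕ} {F : Set (Fin d → ℝ)}

lemma mem_sub_image {x y : Fin d → ℝ} : y ∈ (fun z => x - z) '' F ↔ x - y ∈ F := by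
  constructor
  · rintro ⟨z, hz, rfl⟩; simpa using hz
  · intro h; exact ⟨x - y, h, by simp [sub_sub_cancel]⟩

lemma sub_image_eq (x : Fin d → ℝ) : (fun z => x - z) '' F = (fun y => x - y) ⁻¹' F := by
  ext y; rw [Set.mem_preimage, ← mem_sub_image, Set.mem_image]

lemma measurableSet_sub_image (hF : MeasurableSet F) (x : Fin d → ℝ) :
    MeasurableSet ((fun z => x - z) '' F) := by
  rw [sub_image_eq]
  exact (measurable_const.sub measurable_id) hF

lemma nu_sub_eq (hF : MeasurableSet F) (ν : Measure (Fin d → ℝ)) (x : Fin d → ℝ) :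
    ν ((fun z => x - z) '' F) = ∫⁻ y, F.indicator (fun _ => (1 : ℝ≥0∞)) (x - y) ∂ν := by
  rw [← lintegral_indicator_one (measurableSet_sub_image hF x)]
  refine lintegral_congr fun y => ?_
  by_cases hy : x - y ∈ F
  · rw [Set.indicator_of_mem (mem_sub_image.mpr hy), Set.indicator_of_mem hy]; rfl
  · rw [Set.indicator_of_notMem (fun hc => hy (mem_sub_image.mp hc)),
      Set.indicator_of_notMem hy]

lemma meas_nu_sub (hF : MeasurableSet F) (ν : Measure (Fin d → ℝ)) [SFinite ν] :
    Measurable fun x : Fin d → ℝ => ν ((fun z => x - z) '' F) := by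
  simp only [fun x => nu_sub_eq hF ν x]
  exact Measurable.lintegral_prod_right
    ((measurable_one.indicator hF).comp (measurable_fst.sub measurable_snd))

lemma key_fubini (hF : MeasurableSet F) (ν : Measure (Fin d → ℝ))
    {t Λ : Set (Fin d → ℝ)} (ht : MeasurableSet t) (hfin : ν t ≠ ⊤)
    (hsub : ∀ y ∈ t, ∀ z ∈ F, y + z ∈ Λ) :
    ∫⁻ x in Λ, (ν.restrict t) ((fun z => x - z) '' F) = volume F * ν t := by
  have hρfin : IsFiniteMeasure (ν.restrict t) :=
    ⟨by rwa [Measure.restrict_apply_univ, lt_top_iff_ne_top]⟩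
  have hmeas : Measurable (Function.uncurry fun (x y : Fin d → ℝ) =>
      F.indicator (fun _ => (1 : ℝ≥0∞)) (x - y)) :=
    (measurable_one.indicator hF).comp (measurable_fst.sub measurable_snd)
  calc ∫⁻ x in Λ, (ν.restrict t) ((fun z => x - z) '' F)
      = ∫⁻ x in Λ, ∫⁻ y in t, F.indicator (fun _ => (1:ℝ≥0∞)) (x - y) ∂ν := by
        refine lintegral_congr fun x => nu_sub_eq hF _ x
    _ = ∫⁻ y in t, ∫⁻ x in Λ, F.indicator (fun _ => (1:ℝ≥0∞)) (x - y) ∂volume ∂ν :=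
        lintegral_lintegral_swap hmeas.aemeasurable
    _ = ∫⁻ y in t, volume F ∂ν := by
        refine setLIntegral_congr_fun ht (fun y hy => ?_)
        have hpre : ∀ x : Fin d → ℝ, F.indicator (fun _ => (1:ℝ≥0∞)) (x - y)
            = ((fun x => x - y) ⁻¹' F).indicator (1 : (Fin d → ℝ) → ℝ≥0∞) x := by
          intro x
          by_cases hx : x - y ∈ F <;> simp [Set.indicator, hx]
        simp only [hpre]
        have hmp : MeasurableSet ((fun x => x - y) ⁻¹' F) :=
          (measurable_id.sub measurable_const) hF
        rw [lintegral_indicator_one hmp, Measure.restrict_apply hmp]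
        have hsub2 : (fun x => x - y) ⁻¹' F ⊆ Λ := by
          intro x hx
          have := hsub y hy (x - y) hx
          simpa using this
        rw [Set.inter_eq_self_of_subset_left hsub2]
        have : (fun x : Fin d → ℝ => x - y) = (fun x => x + (-y)) := by
          funext x; rw [sub_eq_add_neg]
        rw [this, measure_preimage_add_right]
    _ = volume F * ν t := by rw [setLIntegral_const]

end SubImage

section Heavy

lemma add_mem_Lam {d : ℕ} {F : Set (Fin d → ℝ)} (hF_sub : F ⊆ cube d 0)
    {L : ℝ} (hL : 1 < L) {j : Fin d → ℤ} (hjL : ‖j‖ < L - 1) :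
    ∀ y ∈ cube d j, ∀ z ∈ F, y + z ∈ ⋃ k ∈ {k : Fin d → ℤ | ‖k‖ < L}, cube d k := by
  intro y hy z hz
  have hmem : y + z ∈ cube d (fun i => ⌊(y + z) i + 1/2⌋) := mem_cube_floor (y + z)
  set k : Fin d → ℤ := fun i => ⌊(y + z) i + 1/2⌋ with hk
  have hkL : ‖k‖ < L := by
    rw [pi_norm_lt_iff (by linarith : (0:ℝ) < L)]
    intro i
    obtain ⟨hy1, hy2⟩ := hy i
    obtain ⟨hz1, hz2⟩ := hF_sub hz i
    simp only [Pi.zero_apply, Int.cast_zero] at hz1 hz2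
    have hfl : (k i : ℝ) ≤ (y + z) i + 1/2 := Int.floor_le _
    have hfl2 : (y + z) i + 1/2 < (k i : ℝ) + 1 := Int.lt_floor_add_one _
    have hadd : (y + z) i = y i + z i := rfl
    rw [hadd] at hfl hfl2
    have b1 : k i < j i + 2 := by
      exact_mod_cast (by push_cast; linarith : (k i : ℝ) < ((j i + 2 : ℤ) : ℝ))
    have b2 : j i - 2 < k i := by
      exact_mod_cast (by push_cast; linarith : ((j i - 2 : ℤ) : ℝ) < (k i : ℝ))
    have b1' : k i ≤ j i + 1 := by omega
    have b2' : j i - 1 ≤ k i := by omega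
    have b1r : (k i : ℝ) ≤ (j i : ℝ) + 1 := by exact_mod_cast (by push_cast; exact_mod_cast b1' : (k i:ℝ) ≤ ((j i + 1 : ℤ):ℝ))
    have b2r : (j i : ℝ) - 1 ≤ (k i : ℝ) := by exact_mod_cast (by push_cast; exact_mod_cast b2' : ((j i - 1 : ℤ):ℝ) ≤ (k i:ℝ))
    have hji : ‖j i‖ ≤ ‖j‖ := norm_le_pi_norm j i
    rw [Int.norm_eq_abs] at hji ⊢
    have habs : |(k i : ℝ)| ≤ |(j i : ℝ)| + 1 :=
      abs_le.mpr ⟨by linarith [neg_abs_le (j i : ℝ)], by linarith [le_abs_self (j i : ℝ)]⟩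
    linarith
  exact Set.mem_biUnion hkL hmem

open scoped Classical in
lemma heavy_bound {d : ℕ} {F : Set (Fin d → ℝ)} (hF : MeasurableSet F) (hF_sub : F ⊆ cube d 0)
    (ν : Measure (Fin d → ℝ)) [IsLocallyFiniteMeasure ν] {h L : ℝ} (hh : 0 < h) (hL : 1 < L)
    {j : Fin d → ℤ} (hjL : ‖j‖ < L - 1) (hjh : ENNReal.ofReal h ≤ ν (cube d j)) :
    ENNReal.ofReal h * volume F ≤
      regCoef d ν h j *
        ∫⁻ x in (⋃ k ∈ {k : Fin d → ℤ | ‖k‖ < L}, cube d k),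
          (ν.restrict (cube d j)) ((fun z => x - z) '' F) := by
  rw [key_fubini hF ν (measurableSet_cube d j) (measure_cube_lt_top d ν j).ne
    (add_mem_Lam hF_sub hL hjL)]
  have hν0 : ν (cube d j) ≠ 0 :=
    (lt_of_lt_of_le (ENNReal.ofReal_pos.mpr hh) hjh).ne'
  rw [regCoef]
  split_ifs with hif
  · rw [one_mul, mul_comm]
    exact mul_le_mul_right hjh _
  · refine le_of_eq ?_
    rw [mul_comm (volume F) (ν (cube d j)), ← mul_assoc,
      ENNReal.div_mul_cancel hν0 (measure_cube_lt_top d ν j).ne]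

end Heavy

/-- with `V_h(x) := f_u · ν^{(h)}(x - F)`, `Λ` the union of the cubes
`Λ_j`, `|j| < L`, and `Λ̃` the union of the cubes `Λ_j`, `|j| < L - 1`, one has
`|Λ|⁻¹ ∫_Λ V_h ψ² ≥ c₁ h |Λ̃|⁻¹ #{j : |j| < L-1, ν(Λ_j) ≥ h}` for a constant `c₁ > 0`
depending only on `d`, `f_u`, `|F|` and `s`. -/
theorem statement7 (d : ℕ) (hd : 0 < d) (f_u : ℝ) (hfu : 0 < f_u)
    (F : Set (Fin d → ℝ)) (hF_meas : MeasurableSet F) (hF_sub : F ⊆ cube d 0)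
    (hF_pos : 0 < volume F) (s : ℝ) (hs : 0 < s) :
    ∃ c₁ : ℝ, 0 < c₁ ∧
      ∀ ψ : (Fin d → ℝ) → ℝ, Measurable ψ → (∀ x, 0 < ψ x) →
        (∀ (x : Fin d → ℝ) (j : Fin d → ℤ), ψ (x + latVec d j) = ψ x) →
        (∀ x ∈ cube d 0, s ≤ ψ x ^ 2) →
        ∀ ν : Measure (Fin d → ℝ), IsLocallyFiniteMeasure ν →
        ∀ h L : ℝ, 0 < h → 1 < L →
          ENNReal.ofReal (c₁ * h) *
            ((({j : Fin d → ℤ | ‖j‖ < L - 1 ∧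
                ENNReal.ofReal h ≤ ν (cube d j)}.encard : ℕ∞) : ℝ≥0∞) /
              volume (⋃ j ∈ {j : Fin d → ℤ | ‖j‖ < L - 1}, cube d j)) ≤
          (∫⁻ x in ⋃ j ∈ {j : Fin d → ℤ | ‖j‖ < L}, cube d j,
              ENNReal.ofReal f_u * reg d ν h ((fun z => x - z) '' F) *
                ENNReal.ofReal (ψ x ^ 2)) /
            volume (⋃ j ∈ {j : Fin d → ℤ | ‖j‖ < L}, cube d j) := by
  classical
  have hFle : volume F ≤ 1 := by rw [← volume_cube d 0]; exact measure_mono hF_sub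
  have hFfin : volume F ≠ ⊤ := (lt_of_le_of_lt hFle one_lt_top).ne
  have hFt : 0 < (volume F).toReal := ENNReal.toReal_pos hF_pos.ne' hFfin
  refine ⟨f_u * s * (volume F).toReal / 3 ^ d, by positivity, ?_⟩
  intro ψ hψm hψpos hψper hψs ν hνinst h L hh hL
  have hL0 : (0:ℝ) < L := lt_trans one_pos hL
  have hL1 : (0:ℝ) < L - 1 := by linarith
  -- ψ² ≥ s everywhere
  have hψs' : ∀ x, s ≤ ψ x ^ 2 := by
    intro x
    have h0 : x - latVec d (fun i => ⌊x i + 1/2⌋) ∈ cube d 0 := by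
      intro i
      simp only [Pi.sub_apply, latVec, Pi.zero_apply, Int.cast_zero]
      have h1 := Int.floor_le (x i + 1/2)
      have h2 := Int.lt_floor_add_one (x i + 1/2)
      constructor <;> push_cast at h1 h2 ⊢ <;> linarith
    have hper := hψper (x - latVec d (fun i => ⌊x i + 1/2⌋)) (fun i => ⌊x i + 1/2⌋)
    have hxx : (x - latVec d (fun i => ⌊x i + 1/2⌋)) + latVec d (fun i => ⌊x i + 1/2⌋) = x := by
      funext i; simp
    rw [hxx] at hper
    rw [hper]
    exact hψs _ h0
  set Λ := ⋃ j ∈ {j : Fin d → ℤ | ‖j‖ < L}, cube d j with hΛ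
  set Hfin : Finset (Fin d → ℤ) :=
    (lattFin d (L-1)).filter (fun j => ENNReal.ofReal h ≤ ν (cube d j)) with hHfin
  have hset : {j : Fin d → ℤ | ‖j‖ < L - 1 ∧ ENNReal.ofReal h ≤ ν (cube d j)} = ↑Hfin := by
    ext j
    simp [hHfin, Finset.mem_filter, mem_lattFin hL1]
  have hNcast : ((({j : Fin d → ℤ | ‖j‖ < L - 1 ∧
      ENNReal.ofReal h ≤ ν (cube d j)}.encard : ℕ∞)) : ℝ≥0∞) = (Hfin.card : ℝ≥0∞) := by
    rw [hset, Set.encard_coe_eq_coe_finsetCard]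
    simp
  -- cardinalities
  have hceil : 2 ≤ ⌈L⌉ := by
    have : 1 < ⌈L⌉ := Int.lt_ceil.mpr (by exact_mod_cast hL)
    omega
  have hceil2 : ⌈L - 1⌉ = ⌈L⌉ - 1 := by
    simpa using Int.ceil_sub_int L 1
  have hcard : ((2*⌈L⌉-1).toNat ^ d : ℕ) ≤ 3^d * (2*⌈L-1⌉-1).toNat ^ d := by
    rw [hceil2, ← mul_pow]
    exact Nat.pow_le_pow_left (by omega) d
  have hcoef_ne_top : ∀ j ∈ Hfin, regCoef d ν h j ≠ ⊤ := by
    intro j hj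
    have hjh : ENNReal.ofReal h ≤ ν (cube d j) := (Finset.mem_filter.mp hj).2
    have hν0 : ν (cube d j) ≠ 0 := (lt_of_lt_of_le (ENNReal.ofReal_pos.mpr hh) hjh).ne'
    rw [regCoef]
    split_ifs
    · exact one_ne_top
    · exact (ENNReal.div_lt_top ofReal_ne_top hν0).ne
  -- main integral lower bound
  set A := ∫⁻ x in Λ, ENNReal.ofReal f_u * reg d ν h ((fun z => x - z) '' F) *
      ENNReal.ofReal (ψ x ^ 2) with hA_def
  have hstep1 : ∫⁻ x in Λ, (ENNReal.ofReal f_u * ENNReal.ofReal s) *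
      reg d ν h ((fun z => x - z) '' F) ≤ A := by
    refine lintegral_mono fun x => ?_
    calc (ENNReal.ofReal f_u * ENNReal.ofReal s) * reg d ν h ((fun z => x - z) '' F)
        = ENNReal.ofReal f_u * reg d ν h ((fun z => x - z) '' F) * ENNReal.ofReal s := by ring
      _ ≤ ENNReal.ofReal f_u * reg d ν h ((fun z => x - z) '' F) * ENNReal.ofReal (ψ x ^ 2) :=
          mul_le_mul_right (ENNReal.ofReal_le_ofReal (hψs' x)) _
  have hstep2 : ∫⁻ x in Λ, (∑ j ∈ Hfin, regCoef d ν h j *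
        (ν.restrict (cube d j)) ((fun z => x - z) '' F))
      ≤ ∫⁻ x in Λ, reg d ν h ((fun z => x - z) '' F) := by
    refine lintegral_mono fun x => ?_
    rw [reg_eq, Measure.sum_apply _ (measurableSet_sub_image hF_meas x)]
    refine le_trans (le_of_eq (Finset.sum_congr rfl fun j _ => ?_)) (ENNReal.sum_le_tsum Hfin)
    rw [Measure.smul_apply, smul_eq_mul]
  have hstep3 : ∫⁻ x in Λ, (∑ j ∈ Hfin, regCoef d ν h j *
        (ν.restrict (cube d j)) ((fun z => x - z) '' F))
      = ∑ j ∈ Hfin, regCoef d ν h j *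
          ∫⁻ x in Λ, (ν.restrict (cube d j)) ((fun z => x - z) '' F) := by
    rw [lintegral_finset_sum]
    · exact Finset.sum_congr rfl fun j hj => lintegral_const_mul' _ _ (hcoef_ne_top j hj)
    · intro j hj
      haveI : IsFiniteMeasure (ν.restrict (cube d j)) :=
        ⟨by rw [Measure.restrict_apply_univ]; exact measure_cube_lt_top d ν j⟩
      exact (meas_nu_sub hF_meas _).const_mul _
  have hstep4 : ∑ j ∈ Hfin, (ENNReal.ofReal h * volume F)
      ≤ ∑ j ∈ Hfin, regCoef d ν h j *
          ∫⁻ x in Λ, (ν.restrict (cube d j)) ((fun z => x - z) '' F) := by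
    refine Finset.sum_le_sum fun j hj => ?_
    obtain ⟨hj1, hj2⟩ := Finset.mem_filter.mp hj
    exact heavy_bound hF_meas hF_sub ν hh hL ((mem_lattFin hL1).mp hj1) hj2
  have hA : ENNReal.ofReal f_u * ENNReal.ofReal s *
      ((Hfin.card : ℝ≥0∞) * (ENNReal.ofReal h * volume F)) ≤ A := by
    calc ENNReal.ofReal f_u * ENNReal.ofReal s *
        ((Hfin.card : ℝ≥0∞) * (ENNReal.ofReal h * volume F))
        = (ENNReal.ofReal f_u * ENNReal.ofReal s) *
            ∑ _j ∈ Hfin, (ENNReal.ofReal h * volume F) := by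
          rw [Finset.sum_const, nsmul_eq_mul]
      _ ≤ (ENNReal.ofReal f_u * ENNReal.ofReal s) *
            ∑ j ∈ Hfin, regCoef d ν h j *
              ∫⁻ x in Λ, (ν.restrict (cube d j)) ((fun z => x - z) '' F) :=
          mul_le_mul_right hstep4 _
      _ = (ENNReal.ofReal f_u * ENNReal.ofReal s) *
            ∫⁻ x in Λ, (∑ j ∈ Hfin, regCoef d ν h j *
              (ν.restrict (cube d j)) ((fun z => x - z) '' F)) := by rw [hstep3]
      _ ≤ (ENNReal.ofReal f_u * ENNReal.ofReal s) *
            ∫⁻ x in Λ, reg d ν h ((fun z => x - z) '' F) := mul_le_mul_right hstep2 _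
      _ = ∫⁻ x in Λ, (ENNReal.ofReal f_u * ENNReal.ofReal s) *
            reg d ν h ((fun z => x - z) '' F) :=
          (lintegral_const_mul' _ _ (ENNReal.mul_ne_top ofReal_ne_top ofReal_ne_top)).symm
      _ ≤ A := hstep1
  -- final arithmetic
  have hvolΛ : volume Λ = ((2*⌈L⌉-1).toNat ^ d : ℕ) := by
    rw [hΛ]; exact volume_biUnion_latt d hL0
  rw [hNcast, volume_biUnion_latt d hL1, hvolΛ]
  set vT : ℝ≥0∞ := (((2*⌈L⌉-1).toNat ^ d : ℕ) : ℝ≥0∞) with hvT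
  set vT' : ℝ≥0∞ := (((2*⌈L-1⌉-1).toNat ^ d : ℕ) : ℝ≥0∞) with hvT'
  have hv'0 : vT' ≠ 0 := by
    rw [hvT']
    refine Nat.cast_ne_zero.mpr (pow_ne_zero _ ?_)
    omega
  have hv'top : vT' ≠ ⊤ := by rw [hvT']; exact natCast_ne_top _
  have hv0 : vT ≠ 0 := by
    rw [hvT]
    refine Nat.cast_ne_zero.mpr (pow_ne_zero _ ?_)
    omega
  have hvtop : vT ≠ ⊤ := by rw [hvT]; exact natCast_ne_top _
  rw [ENNReal.le_div_iff_mul_le (Or.inl hv0) (Or.inl hvtop)]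
  have hvle : vT ≤ (3:ℝ≥0∞)^d * vT' := by
    rw [hvT, hvT']
    calc (((2*⌈L⌉-1).toNat ^ d : ℕ) : ℝ≥0∞)
        ≤ ((3^d * (2*⌈L-1⌉-1).toNat ^ d : ℕ) : ℝ≥0∞) := Nat.cast_le.mpr hcard
      _ = (3:ℝ≥0∞)^d * (((2*⌈L-1⌉-1).toNat ^ d : ℕ) : ℝ≥0∞) := by push_cast; ring
  set N : ℝ≥0∞ := (Hfin.card : ℝ≥0∞) with hN
  set a : ℝ≥0∞ := ENNReal.ofReal (f_u * s * (volume F).toReal / 3 ^ d * h) with ha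
  calc a * (N / vT') * vT
      ≤ a * (N / vT') * ((3:ℝ≥0∞)^d * vT') := mul_le_mul_right hvle _
    _ = a * ((N / vT') * ((3:ℝ≥0∞)^d * vT')) := by rw [mul_assoc]
    _ = a * ((3:ℝ≥0∞)^d * ((N / vT') * vT')) := by rw [mul_left_comm (N / vT')]
    _ = a * ((3:ℝ≥0∞)^d * N) := by rw [ENNReal.div_mul_cancel hv'0 hv'top]
    _ = ENNReal.ofReal f_u * ENNReal.ofReal s * (N * (ENNReal.ofReal h * volume F)) := by
        have h3 : (3:ℝ≥0∞)^d = ENNReal.ofReal ((3:ℝ)^d) := by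
          rw [ENNReal.ofReal_pow (by norm_num)]
          norm_num
        rw [ha, h3, ← mul_assoc, ← ENNReal.ofReal_mul (by positivity)]
        have harith : f_u * s * (volume F).toReal / 3 ^ d * h * 3 ^ d
            = f_u * s * (volume F).toReal * h := by
          field_simp
        rw [harith, ENNReal.ofReal_mul (by positivity), ENNReal.ofReal_mul (by positivity),
          ENNReal.ofReal_mul (by positivity), ENNReal.ofReal_toReal hFfin]
        ring
    _ ≤ A := hA
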